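/- For every (x, y, z) ∈ ℝ³, the Rikitake vector field satisfies X_β(x, y, z) = ∇I₂^β(x, y, z) × ∇I₁(x, y, z), where × denotes the cross product in ℝ³; explicitly, ∇I₂^β(x,y,z) = (−x/2, y/2, −β), ∇I₁(x,y,z) = (x, y, 2z), and their cross product equals (yz + βy, xz − βx, −xy). (Hamiltonian realization of the Rikitake system with rescaling function ν ≡ −1.) -/

import Mathlib

open Matrix

/-- Coordinate gradient of `f : ℝⁿ → ℝ` at `x`. -/
noncomputable def grad {n : ℕ} (f : (Fin n → ℝ) → ℝ) (x : Fin n → ℝ) : Fin n → ℝ :=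
  fun i => fderiv ℝ f x (Pi.single i 1)

/-- Hessian matrix of `f : ℝⁿ → ℝ` at `x`. -/
noncomputable def hess {n : ℕ} (f : (Fin n → ℝ) → ℝ) (x : Fin n → ℝ) :
    Matrix (Fin n) (Fin n) ℝ :=
  Matrix.of fun i j => fderiv ℝ (fun y => fderiv ℝ f y (Pi.single j 1)) x (Pi.single i 1)

/-- Jacobian matrix of a map `Φ : ℝⁿ → ℝⁿ` at `x`. -/
noncomputable def jac {n : ℕ} (Φ : (Fin n → ℝ) → (Fin n → ℝ)) (x : Fin n → ℝ) :
    Matrix (Fin n) (Fin n) ℝ :=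
  Matrix.of fun i j => fderiv ℝ (fun y => Φ y i) x (Pi.single j 1)

/-- The Rikitake vector field `X_β(x,y,z) = (yz + βy, xz − βx, −xy)`. -/
noncomputable def Riki (β : ℝ) (p : Fin 3 → ℝ) : Fin 3 → ℝ :=
  ![p 1 * p 2 + β * p 1, p 0 * p 2 - β * p 0, -(p 0 * p 1)]

/-- The first integral `I₁(x,y,z) = ½(x² + y²) + z²` of the Rikitake system. -/
noncomputable def rikiI1 (p : Fin 3 → ℝ) : ℝ :=
  (1 / 2) * ((p 0) ^ 2 + (p 1) ^ 2) + (p 2) ^ 2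

/-- The first integral `I₂^β(x,y,z) = ¼(−x² + y²) − βz` of the Rikitake system. -/
noncomputable def rikiI2 (β : ℝ) (p : Fin 3 → ℝ) : ℝ :=
  (1 / 4) * (-(p 0) ^ 2 + (p 1) ^ 2) - β * p 2

/-- Lyapunov stability of an equilibrium `p` of the vector field `X` on `ℝ³`. -/
def LyapunovStable3 (X : (Fin 3 → ℝ) → (Fin 3 → ℝ)) (p : Fin 3 → ℝ) : Prop :=
  ∀ U : Set (Fin 3 → ℝ), IsOpen U → p ∈ U →
    ∃ V : Set (Fin 3 → ℝ), V ⊆ U ∧ IsOpen V ∧ p ∈ V ∧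
      ∀ f : ℝ → (Fin 3 → ℝ), f 0 ∈ V →
        (∀ t : ℝ, 0 ≤ t → HasDerivWithinAt f (X (f t)) (Set.Ici 0) t) →
        ∀ t : ℝ, 0 ≤ t → f t ∈ U

/-- Hamiltonian realization of the Rikitake system with rescaling function
`ν ≡ −1`: `X_β = ∇I₂^β × ∇I₁`, with the explicit gradients and cross product. -/
theorem rikitake_cross_product_realization (β : ℝ) (hβ : β ≠ 0) (p : Fin 3 → ℝ) :
    grad (rikiI2 β) p = ![-(p 0) / 2, p 1 / 2, -β] ∧
    grad rikiI1 p = ![p 0, p 1, 2 * p 2] ∧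
    crossProduct ![-(p 0) / 2, p 1 / 2, -β] ![p 0, p 1, 2 * p 2]
      = ![p 1 * p 2 + β * p 1, p 0 * p 2 - β * p 0, -(p 0 * p 1)] ∧
    Riki β p = crossProduct (grad (rikiI2 β) p) (grad rikiI1 p) := by

  have h0 : HasFDerivAt (fun q : Fin 3 → ℝ => q 0) _ p := hasFDerivAt_apply (𝕜 := ℝ) 0 p
  have h1 : HasFDerivAt (fun q : Fin 3 → ℝ => q 1) _ p := hasFDerivAt_apply (𝕜 := ℝ) 1 p
  have h2 : HasFDerivAt (fun q : Fin 3 → ℝ => q 2) _ p := hasFDerivAt_apply (𝕜 := ℝ) 2 p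
  have D1 := (((h0.mul h0).add (h1.mul h1)).const_mul ((1:ℝ)/2)).add (h2.mul h2)
  have D2 := ((((h0.mul h0).neg).add (h1.mul h1)).const_mul ((1:ℝ)/4)).sub (h2.const_mul β)
  have g2 : grad (rikiI2 β) p = ![-(p 0) / 2, p 1 / 2, -β] := by
    funext i
    unfold grad rikiI2
    simp only [pow_two]
    rw [(show HasFDerivAt (fun p : Fin 3 → ℝ => 1 / 4 * (-(p 0 * p 0) + p 1 * p 1) - β * p 2) _ p from D2).fderiv]
    fin_cases i <;> simp <;> ring
  have g1 : grad rikiI1 p = ![p 0, p 1, 2 * p 2] := by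
    funext i
    unfold grad rikiI1
    simp only [pow_two]
    rw [(show HasFDerivAt (fun p : Fin 3 → ℝ => 1 / 2 * (p 0 * p 0 + p 1 * p 1) + p 2 * p 2) _ p from D1).fderiv]
    fin_cases i <;> simp <;> ring
  have hc : crossProduct ![-(p 0) / 2, p 1 / 2, -β] ![p 0, p 1, 2 * p 2]
      = ![p 1 * p 2 + β * p 1, p 0 * p 2 - β * p 0, -(p 0 * p 1)] := by
    funext i
    fin_cases i <;> simp [crossProduct] <;> ring
  refine ⟨g2, g1, hc, ?_⟩
  rw [g1, g2, hc]
  rfl
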